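/- For every compact metric space Y, the family HID(Y) of all hereditarily infinite-dimensional compacta contained in Y is a coanalytic subset of the hyperspace 2^Y. -/

import Mathlib

open Topology TopologicalSpace Metric Set Filter

/-- The Hilbert cube `[0,1]^ℕ` (with the product topology). -/
abbrev HCube : Type := ℕ → unitInterval

/-- The hyperspace `2^X` of nonempty compact subsets of `X`, with the Hausdorff metric. -/
abbrev Hyper (X : Type) [MetricSpace X] : Type := TopologicalSpace.NonemptyCompacts X

/-- The hyperspace `C(X)` of subcontinua (nonempty compact connected subsets) of `X`. -/
abbrev Subcontinua (X : Type) [MetricSpace X] : Type :=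
  {K : TopologicalSpace.NonemptyCompacts X // IsConnected (K : Set X)}

/-- A set is `F_σ` if it is a countable union of closed sets. -/
def IsFsigma {Z : Type} [TopologicalSpace Z] (A : Set Z) : Prop :=
  ∃ F : ℕ → Set Z, (∀ n, IsClosed (F n)) ∧ A = ⋃ n, F n

/-- A set is `F_{σδ}` if it is a countable intersection of `F_σ` sets. -/
def IsFsigmaDelta {Z : Type} [TopologicalSpace Z] (A : Set Z) : Prop :=
  ∃ F : ℕ → Set Z, (∀ n, IsFsigma (F n)) ∧ A = ⋂ n, F n

/-- A set is in the class `D_2(F_σ)` if it is a difference of two `F_σ` sets. -/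
def IsD2Fsigma {Z : Type} [TopologicalSpace Z] (A : Set Z) : Prop :=
  ∃ F G : Set Z, IsFsigma F ∧ IsFsigma G ∧ A = F \ G

/-- A set is coanalytic (`Π^1_1`) if its complement is analytic. -/
def IsCoanalytic {Z : Type} [TopologicalSpace Z] (A : Set Z) : Prop :=
  MeasureTheory.AnalyticSet Aᶜ

/-- A subset `S` of a space has finitely many connected components (as a subspace). -/
def FinitelyManyComponents {Z : Type} [TopologicalSpace Z] (S : Set Z) : Prop :=
  {C : Set Z | ∃ x ∈ S, C = connectedComponentIn S x}.Finite

/-- A metric continuum is aposyndetic (equivalently, semi-locally connected) iff for every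
`ε > 0` every point has an open neighborhood `U` of diameter `< ε` whose complement has
finitely many connected components. -/
def Aposyndetic (Z : Type) [MetricSpace Z] : Prop :=
  ∀ ε : ℝ, 0 < ε → ∀ z : Z, ∃ U : Set Z, IsOpen U ∧ z ∈ U ∧ Metric.diam U < ε ∧
    FinitelyManyComponents Uᶜ

/-- A metric continuum is colocally connected iff every point has arbitrarily small
open neighborhoods with connected complement. -/
def ColocallyConnected (Z : Type) [MetricSpace Z] : Prop :=
  ∀ ε : ℝ, 0 < ε → ∀ z : Z, ∃ U : Set Z, IsOpen U ∧ z ∈ U ∧ Metric.diam U < ε ∧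
    IsPreconnected (Uᶜ : Set Z)

/-- The family `Apo(Y)` of nondegenerate aposyndetic subcontinua of `Y`, in `C(Y)`. -/
def Apo (Y : Type) [MetricSpace Y] : Set (Subcontinua Y) :=
  {K | (K.1 : Set Y).Nontrivial ∧ Aposyndetic (K.1 : Set Y)}

/-- The family `Col(Y)` of nondegenerate colocally connected subcontinua of `Y`, in `C(Y)`. -/
def Col (Y : Type) [MetricSpace Y] : Set (Subcontinua Y) :=
  {K | (K.1 : Set Y).Nontrivial ∧ ColocallyConnected (K.1 : Set Y)}

/-- A metric continuum `Z` is a Kelley continuum. -/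
def KelleyContinuum (Z : Type) [MetricSpace Z] : Prop :=
  ∀ (z : Z) (zs : ℕ → Z), Tendsto zs atTop (nhds z) →
    ∀ W : Set Z, IsCompact W → IsConnected W → z ∈ W →
      ∃ Ws : ℕ → Set Z, (∀ n, IsCompact (Ws n) ∧ IsConnected (Ws n) ∧ zs n ∈ Ws n) ∧
        Tendsto (fun n => Metric.hausdorffDist (Ws n) W) atTop (nhds 0)

/-- The family `K(X)` of Kelley subcontinua of `X`, in `C(X)`. -/
def KelleyFam (X : Type) [MetricSpace X] : Set (Subcontinua X) :=
  {K | KelleyContinuum (K.1 : Set X)}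

/-- The family `LC(X)` of locally connected subcontinua of `X`, in `C(X)`. -/
def LCFam (X : Type) [MetricSpace X] : Set (Subcontinua X) :=
  {K | LocallyConnectedSpace (K.1 : Set X)}

/-- A subset `K` of `X` is a decomposable continuum if it is a union of two proper
subcontinua. -/
def DecomposableSet {X : Type} [TopologicalSpace X] (K : Set X) : Prop :=
  ∃ A B : Set X, IsCompact A ∧ IsConnected A ∧ IsCompact B ∧ IsConnected B ∧
    A ∪ B = K ∧ A ≠ K ∧ B ≠ K

/-- The family `D(X)` of decomposable subcontinua of `X`, in `C(X)`. -/
def DecompFam (X : Type) [MetricSpace X] : Set (Subcontinua X) :=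
  {K | DecomposableSet (K.1 : Set X)}

/-- Covering dimension at most `n`: every finite open cover has a finite open refinement
which still covers and in which every point belongs to at most `n + 1` members. -/
def CovDimLE (Z : Type) [TopologicalSpace Z] (n : ℕ) : Prop :=
  ∀ 𝒰 : Finset (Set Z), (∀ U ∈ 𝒰, IsOpen U) → ⋃₀ (𝒰 : Set (Set Z)) = Set.univ →
    ∃ 𝒱 : Finset (Set Z), (∀ V ∈ 𝒱, IsOpen V) ∧ ⋃₀ (𝒱 : Set (Set Z)) = Set.univ ∧
      (∀ V ∈ 𝒱, ∃ U ∈ 𝒰, V ⊆ U) ∧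
      ∀ z : Z, {V ∈ (𝒱 : Set (Set Z)) | z ∈ V}.ncard ≤ n + 1

/-- Covering dimension at least `n`. -/
def CovDimGE (Z : Type) [TopologicalSpace Z] (n : ℕ) : Prop :=
  ∀ m : ℕ, m + 1 ≤ n → ¬ CovDimLE Z m

/-- The family `D_n(X) ∩ C(X)` of subcontinua of covering dimension `≥ n`. -/
def DimGEFam (X : Type) [MetricSpace X] (n : ℕ) : Set (Subcontinua X) :=
  {K | CovDimGE (K.1 : Set X) n}

/-- A closed subset `C` of a space `X` is a closed separator of `X`:
`X \ C` is a union of two disjoint nonempty open subsets of `X`. -/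
def IsClosedSeparator {X : Type} [TopologicalSpace X] (C : Set X) : Prop :=
  IsClosed C ∧ ∃ U V : Set X, IsOpen U ∧ IsOpen V ∧ U.Nonempty ∧ V.Nonempty ∧
    Disjoint U V ∧ Cᶜ = U ∪ V

/-- The family `S(X)` of closed separators of `X`, viewed in the hyperspace `2^X`. -/
def SepFam (X : Type) [MetricSpace X] : Set (Hyper X) :=
  {K | IsClosedSeparator (K : Set X)}

/-- The family `S(X) ∩ C(X)` of subcontinua of `X` separating `X`, in `C(X)`. -/
def SepSubcontFam (X : Type) [MetricSpace X] : Set (Subcontinua X) :=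
  {K | IsClosedSeparator (K.1 : Set X)}

/-- The family `N(X)` of (nonempty compact) nowhere dense subsets of `X`, in `2^X`. -/
def NwdFam (X : Type) [MetricSpace X] : Set (Hyper X) :=
  {K | IsNowhereDense (K : Set X)}

/-- The family of nowhere dense subcontinua of `X`, in `C(X)`. -/
def NwdSubcontFam (X : Type) [MetricSpace X] : Set (Subcontinua X) :=
  {K | IsNowhereDense (K.1 : Set X)}

/-- A closed set `B` in a metric space `Q` (thought of as a Hilbert cube) is a `Z`-set:
the identity can be approximated arbitrarily closely by maps missing `B`. -/
def IsZSet {Q : Type} [MetricSpace Q] (B : Set Q) : Prop :=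
  IsClosed B ∧ ∀ ε : ℝ, 0 < ε → ∃ f : Q → Q, Continuous f ∧
    (∀ x : Q, f x ∉ B) ∧ ∀ x : Q, dist (f x) x < ε

/-- A `σZ`-set is a countable union of `Z`-sets. -/
def IsSigmaZSet {Q : Type} [MetricSpace Q] (B : Set Q) : Prop :=
  ∃ F : ℕ → Set Q, (∀ n, IsZSet (F n)) ∧ B = ⋃ n, F n

/-- `A ⊆ Q` is `M`-universal for the class `Cl` of subsets of the Hilbert cube:
every `M₀ ⊆ [0,1]^ℕ` in the class is reduced to `A` by some embedding of the
Hilbert cube into `Q`. -/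
def UniversalFor {Q : Type} [MetricSpace Q] (Cl : Set HCube → Prop) (A : Set Q) : Prop :=
  ∀ M : Set HCube, Cl M → ∃ f : HCube → Q, IsEmbedding f ∧ f ⁻¹' A = M

/-- `A ⊆ Q` is strongly `M`-universal for the class `Cl` of subsets of the Hilbert cube. -/
def StronglyUniversalFor {Q : Type} [MetricSpace Q] (Cl : Set HCube → Prop)
    (A : Set Q) : Prop :=
  ∀ M : Set HCube, Cl M → ∀ K : Set HCube, IsCompact K →
    ∀ f : HCube → Q, IsEmbedding f → IsZSet (f '' K) →
      ∀ ε : ℝ, 0 < ε → ∃ g : HCube → Q, IsEmbedding g ∧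
        IsZSet (Set.range g) ∧ (∀ x ∈ K, g x = f x) ∧
        g ⁻¹' A \ K = M \ K ∧ ∀ x : HCube, dist (g x) (f x) < ε

/-- `A ⊆ Q` is an absorber for the class given by `ClH` (on the Hilbert cube) and
`ClQ` (on `Q`): it belongs to the class, is contained in a `σZ`-set, and is
strongly universal for the class. -/
def IsAbsorberFor {Q : Type} [MetricSpace Q] (ClH : Set HCube → Prop)
    (ClQ : Set Q → Prop) (A : Set Q) : Prop :=
  ClQ A ∧ (∃ B : Set Q, IsSigmaZSet B ∧ A ⊆ B) ∧ StronglyUniversalFor ClH A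

/-- `C` is a closed separator of the space `Z` between `A` and `B`. -/
def SeparatesBetween {Z : Type} [TopologicalSpace Z] (C A B : Set Z) : Prop :=
  IsClosed C ∧ ∃ U V : Set Z, IsOpen U ∧ IsOpen V ∧ A ⊆ U ∧ B ⊆ V ∧
    Disjoint U V ∧ Cᶜ = U ∪ V

/-- A compact metric space is strongly infinite-dimensional if it has an essential
sequence of pairs of disjoint closed sets. -/
def StronglyInfiniteDimensional (Z : Type) [TopologicalSpace Z] : Prop :=
  ∃ A B : ℕ → Set Z, (∀ n, IsClosed (A n) ∧ IsClosed (B n) ∧ Disjoint (A n) (B n)) ∧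
    ∀ C : ℕ → Set Z, (∀ n, SeparatesBetween (C n) (A n) (B n)) → (⋂ n, C n).Nonempty

/-- The family `W_n(Y)` of weakly infinite-dimensional compacta in `Y` of covering
dimension `≥ n`, in `2^Y`. -/
def WFam (Y : Type) [MetricSpace Y] (n : ℕ) : Set (Hyper Y) :=
  {K | ¬ StronglyInfiniteDimensional (K : Set Y) ∧ CovDimGE (K : Set Y) n}

/-- A compact metric space is a `C`-space. -/
def IsCSpace (Z : Type) [MetricSpace Z] : Prop :=
  ∀ ε : ℕ → ℝ, (∀ i, 0 < ε i) →
    ∃ (k : ℕ) (V : Fin k → Set (Set Z)),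
      (∀ i : Fin k, (V i).Finite ∧ (∀ v ∈ V i, IsOpen v ∧ Metric.diam v < ε i.1) ∧
        (V i).Pairwise Disjoint) ∧
      (⋃ i : Fin k, ⋃₀ V i) = Set.univ

/-- The family `C_n(Y)` of compacta in `Y` of covering dimension `≥ n` which are
`C`-spaces, in `2^Y`. -/
def CFam (Y : Type) [MetricSpace Y] (n : ℕ) : Set (Hyper Y) :=
  {K | IsCSpace (K : Set Y) ∧ CovDimGE (K : Set Y) n}

/-- A space is strongly countable-dimensional if it is a countable union of closed
finite-dimensional subspaces. -/
def StronglyCountableDimensional (Z : Type) [TopologicalSpace Z] : Prop :=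
  ∃ F : ℕ → Set Z, (∀ k, IsClosed (F k) ∧ ∃ m : ℕ, CovDimLE (F k) m) ∧ (⋃ k, F k) = Set.univ

/-- The family `SCD_n(Y)` of strongly countable-dimensional compacta in `Y` of
covering dimension `≥ n`, in `2^Y`. -/
def SCDFam (Y : Type) [MetricSpace Y] (n : ℕ) : Set (Hyper Y) :=
  {K | StronglyCountableDimensional (K : Set Y) ∧ CovDimGE (K : Set Y) n}

/-- A compact metric space is hereditarily infinite-dimensional if it is
infinite-dimensional and each nonempty closed subspace is infinite-dimensional or
zero-dimensional. -/
def HereditarilyInfiniteDimensional (Z : Type) [TopologicalSpace Z] : Prop :=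
  (∀ m : ℕ, ¬ CovDimLE Z m) ∧
  ∀ F : Set Z, IsClosed F → F.Nonempty → (∀ m : ℕ, ¬ CovDimLE F m) ∨ CovDimLE F 0

/-- `A` is `Π^1_1`-hard: every coanalytic subset of every zero-dimensional Polish space
continuously reduces to `A`. -/
def Pi11Hard {Z : Type} [TopologicalSpace Z] (A : Set Z) : Prop :=
  ∀ (Y₀ : Type) (_ : TopologicalSpace Y₀), PolishSpace Y₀ →
    TopologicalSpace.IsTopologicalBasis {s : Set Y₀ | IsClopen s} →
    ∀ C : Set Y₀, IsCoanalytic C → ∃ ξ : Y₀ → Z, Continuous ξ ∧ ξ ⁻¹' A = C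

/-- `A` is `Π^1_1`-complete: coanalytic and `Π^1_1`-hard. -/
def Pi11Complete {Z : Type} [TopologicalSpace Z] (A : Set Z) : Prop :=
  IsCoanalytic A ∧ Pi11Hard A


/-! ### Auxiliary machinery for Statement 18 -/

section Statement18Aux
open EMetric

lemma covDimLE_of_homeomorph {Z W : Type} [TopologicalSpace Z] [TopologicalSpace W]
    (e : Z ≃ₜ W) (n : ℕ) (h : CovDimLE Z n) : CovDimLE W n := by
  intro 𝒰 hop hcov
  classical
  obtain ⟨𝒱', h1, h2, h3, h4⟩ := h (𝒰.image (fun U => e ⁻¹' U))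
    (by
      intro U' hU'
      simp only [Finset.mem_image] at hU'
      obtain ⟨U, hU, rfl⟩ := hU'
      exact (hop U hU).preimage e.continuous)
    (by
      rw [eq_univ_iff_forall]
      intro z
      have : e z ∈ ⋃₀ (𝒰 : Set (Set W)) := hcov ▸ mem_univ _
      obtain ⟨U, hU, hzU⟩ := this
      exact ⟨e ⁻¹' U, by simpa using ⟨U, hU, rfl⟩, hzU⟩)
  refine ⟨𝒱'.image (fun V => e.symm ⁻¹' V), ?_, ?_, ?_, ?_⟩
  · intro V hV
    simp only [Finset.mem_image] at hV
    obtain ⟨V', hV', rfl⟩ := hV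
    exact (h1 V' hV').preimage e.symm.continuous
  · rw [eq_univ_iff_forall]
    intro w
    have : e.symm w ∈ ⋃₀ (𝒱' : Set (Set Z)) := h2 ▸ mem_univ _
    obtain ⟨V', hV', hw⟩ := this
    exact ⟨e.symm ⁻¹' V', by simpa using ⟨V', hV', rfl⟩, hw⟩
  · intro V hV
    simp only [Finset.mem_image] at hV
    obtain ⟨V', hV', rfl⟩ := hV
    obtain ⟨U', hU', hsub⟩ := h3 V' hV'
    simp only [Finset.mem_image] at hU'
    obtain ⟨U, hU, rfl⟩ := hU'
    refine ⟨U, hU, ?_⟩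
    intro w hw
    have := hsub hw
    simpa using this
  · intro w
    have key : {V ∈ ((𝒱'.image (fun V => e.symm ⁻¹' V)) : Set (Set W)) | w ∈ V}
        ⊆ (fun V => e.symm ⁻¹' V) '' {V' ∈ (𝒱' : Set (Set Z)) | e.symm w ∈ V'} := by
      rintro V ⟨hV, hwV⟩
      simp only [Finset.coe_image, mem_image] at hV
      obtain ⟨V', hV', rfl⟩ := hV
      exact ⟨V', ⟨hV', hwV⟩, rfl⟩
    calc {V ∈ ((𝒱'.image (fun V => e.symm ⁻¹' V)) : Set (Set W)) | w ∈ V}.ncard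
        ≤ ((fun V => e.symm ⁻¹' V) '' {V' ∈ (𝒱' : Set (Set Z)) | e.symm w ∈ V'}).ncard := by
          apply Set.ncard_le_ncard key
            (((𝒱'.finite_toSet.subset (sep_subset _ _))).image _)
      _ ≤ {V' ∈ (𝒱' : Set (Set Z)) | e.symm w ∈ V'}.ncard :=
          Set.ncard_image_le (𝒱'.finite_toSet.subset (sep_subset _ _))
      _ ≤ n + 1 := h4 _

lemma covDimLE_iff_homeo {Z W : Type} [TopologicalSpace Z] [TopologicalSpace W]
    (e : Z ≃ₜ W) (n : ℕ) : CovDimLE Z n ↔ CovDimLE W n :=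
  ⟨covDimLE_of_homeomorph e n, covDimLE_of_homeomorph e.symm n⟩

variable {Y : Type} [MetricSpace Y]

lemma open_subset_fam (U : Set Y) (hU : IsOpen U) :
    IsOpen {K : NonemptyCompacts Y | (K : Set Y) ⊆ U} := by
  rw [EMetric.isOpen_iff]
  intro K hK
  obtain ⟨δ, hδ, hthick⟩ := K.isCompact.exists_thickening_subset_open hU hK
  refine ⟨ENNReal.ofReal δ, by simpa using hδ, fun K' hK' x hx => ?_⟩
  apply hthick
  rw [mem_thickening_iff_infEdist_lt]
  calc infEdist x (K : Set Y) ≤ EMetric.hausdorffEdist (K' : Set Y) K :=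
        infEdist_le_hausdorffEdist_of_mem hx
    _ < ENNReal.ofReal δ := by rwa [EMetric.mem_ball] at hK'

lemma open_meet_fam (E : Set Y) (hE : IsOpen E) :
    IsOpen {K : NonemptyCompacts Y | ((K : Set Y) ∩ E).Nonempty} := by
  rw [EMetric.isOpen_iff]
  intro K hK
  obtain ⟨x, hxK, hxE⟩ := hK
  obtain ⟨δ, hδ, hball⟩ := Metric.isOpen_iff.1 hE x hxE
  refine ⟨ENNReal.ofReal δ, by simpa using hδ, fun K' hK' => ?_⟩
  rw [EMetric.mem_ball] at hK'
  have hK'' : EMetric.hausdorffEdist (K : Set Y) (K' : Set Y) < ENNReal.ofReal δ := by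
    exact (hausdorffEDist_comm).trans_lt hK'
  obtain ⟨y, hyK', hy⟩ := exists_edist_lt_of_hausdorffEdist_lt hxK hK''
  refine ⟨y, hyK', hball ?_⟩
  rw [Metric.mem_ball, dist_comm]
  exact edist_lt_ofReal.mp hy

lemma closed_subset_rel :
    IsClosed {p : NonemptyCompacts Y × NonemptyCompacts Y | (p.2 : Set Y) ⊆ (p.1 : Set Y)} := by
  rw [← isOpen_compl_iff, EMetric.isOpen_iff]
  rintro ⟨K, F⟩ hp
  simp only [mem_compl_iff, mem_setOf_eq, Set.not_subset] at hp
  obtain ⟨x, hxF, hxK⟩ := hp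
  have hr : 0 < infEdist x (K : Set Y) := by
    rw [pos_iff_ne_zero]
    intro h
    exact hxK (by simpa [K.isCompact.isClosed.closure_eq] using mem_closure_iff_infEdist_zero.2 h)
  set r := infEdist x (K : Set Y) with hrdef
  refine ⟨r / 2, ENNReal.half_pos hr.ne', ?_⟩
  rintro ⟨K', F'⟩ hd
  rw [EMetric.mem_ball, Prod.edist_eq, sup_lt_iff] at hd
  obtain ⟨hdK, hdF⟩ := hd
  simp only [mem_compl_iff, mem_setOf_eq, Set.not_subset]
  have hFF' : EMetric.hausdorffEdist (F : Set Y) (F' : Set Y) < r / 2 := by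
    exact (hausdorffEDist_comm).trans_lt hdF
  obtain ⟨x', hx'F', hx'⟩ := exists_edist_lt_of_hausdorffEdist_lt hxF hFF'
  refine ⟨x', hx'F', fun hx'K' => ?_⟩
  have h1 : infEdist x' (K : Set Y) < r / 2 :=
    lt_of_le_of_lt (infEdist_le_hausdorffEdist_of_mem hx'K') hdK
  obtain ⟨y, hyK, hy⟩ := infEdist_lt_iff.mp h1
  have hle : r ≤ edist x y := infEdist_le_edist_of_mem hyK
  have h2 : edist x y < r := by
    calc edist x y ≤ edist x x' + edist x' y := edist_triangle _ _ _
      _ < r / 2 + r / 2 := ENNReal.add_lt_add hx' hy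
      _ = r := ENNReal.add_halves r
  exact absurd (lt_of_le_of_lt hle h2) (lt_irrefl r)

/-- The union of the basic balls coded by `g`. -/
def Gs (u : ℕ → Y) (g : List (ℕ × ℚ)) : Set Y := ⋃ b ∈ g, Metric.ball (u b.1) (b.2 : ℝ)

lemma isOpen_Gs (u : ℕ → Y) (g : List (ℕ × ℚ)) : IsOpen (Gs u g) :=
  isOpen_biUnion fun _ _ => isOpen_ball

lemma isOpen_multE (u : ℕ → Y) (c : List (List (ℕ × ℚ))) (m : ℕ) :
    IsOpen {z : Y | m + 1 < {g | g ∈ c ∧ z ∈ Gs u g}.ncard} := by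
  rw [isOpen_iff_forall_mem_open]
  intro z hz
  set S := {g | g ∈ c ∧ z ∈ Gs u g} with hS
  classical
  have hSfin : S.Finite := (c.toFinset.finite_toSet.subset (fun g hg => List.mem_toFinset.2 hg.1))
  refine ⟨⋂ g ∈ S, Gs u g, ?_, ?_, ?_⟩
  · intro z' hz'
    have hsub : S ⊆ {g | g ∈ c ∧ z' ∈ Gs u g} := by
      rintro g ⟨hgc, hzg⟩
      exact ⟨hgc, mem_iInter₂.1 hz' g ⟨hgc, hzg⟩⟩
    have hfin : {g | g ∈ c ∧ z' ∈ Gs u g}.Finite :=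
      (c.toFinset.finite_toSet.subset (fun g hg => List.mem_toFinset.2 hg.1))
    exact lt_of_lt_of_le hz (Set.ncard_le_ncard hsub hfin)
  · exact hSfin.isOpen_biInter (fun g _ => isOpen_Gs u g)
  · exact mem_iInter₂.2 (fun g hg => hg.2)

lemma exists_basic_cover (u : ℕ → Y) (hu : DenseRange u) (C O : Set Y) (hC : IsCompact C)
    (hO : IsOpen O) (hCO : C ⊆ O) :
    ∃ g : List (ℕ × ℚ), C ⊆ Gs u g ∧ Gs u g ⊆ O := by
  classical
  have key : ∀ x ∈ C, ∃ b : {b : ℕ × ℚ // Metric.ball (u b.1) (b.2 : ℝ) ⊆ O},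
      x ∈ Metric.ball (u b.1.1) ((b.1.2 : ℝ)) := by
    intro x hx
    obtain ⟨ρ₀, hρ₀, hball⟩ := Metric.isOpen_iff.1 hO x (hCO hx)
    obtain ⟨ρ, hρ1, hρ2⟩ := exists_rat_btwn (by positivity : (0:ℝ) < ρ₀ / 2)
    have hρpos : (0:ℝ) < ρ := by exact_mod_cast hρ1
    obtain ⟨n, hn⟩ := hu.exists_dist_lt x hρpos
    refine ⟨⟨(n, ρ), fun y hy => hball ?_⟩, ?_⟩
    · rw [Metric.mem_ball] at hy ⊢
      calc dist y x ≤ dist y (u n) + dist (u n) x := dist_triangle _ _ _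
        _ < ρ + ρ := by rw [dist_comm (u n) x]; exact add_lt_add hy hn
        _ ≤ ρ₀ := by linarith
    · exact Metric.mem_ball.2 hn
  obtain ⟨t, ht⟩ := hC.elim_finite_subcover
    (fun b : {b : ℕ × ℚ // Metric.ball (u b.1) (b.2 : ℝ) ⊆ O} =>
      Metric.ball (u b.1.1) ((b.1.2 : ℝ)))
    (fun _ => isOpen_ball)
    (fun x hx => by obtain ⟨b, hb⟩ := key x hx; exact mem_iUnion.2 ⟨b, hb⟩)
  refine ⟨t.toList.map Subtype.val, ?_, ?_⟩
  · intro x hx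
    have := ht hx
    obtain ⟨b, hb, hxb⟩ := mem_iUnion₂.1 this
    exact mem_iUnion₂.2 ⟨b.1, by simp [Finset.mem_toList.2 hb], hxb⟩
  · intro x hx
    obtain ⟨b', hb', hxb⟩ := mem_iUnion₂.1 hx
    simp only [List.mem_map, Finset.mem_toList] at hb'
    obtain ⟨b, -, rfl⟩ := hb'
    exact b.2 hxb

variable [CompactSpace Y]

lemma covDimLE_of_codes (u : ℕ → Y) (K : NonemptyCompacts Y) (m : ℕ)
    (h : ∀ j : ℕ, ∃ c : List (List (ℕ × ℚ)),
      (∀ g ∈ c, Metric.diam (Gs u g) < 1 / (j + 1)) ∧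
      ((K : Set Y) ⊆ ⋃ g ∈ c, Gs u g) ∧
      (∀ z ∈ (K : Set Y), {g | g ∈ c ∧ z ∈ Gs u g}.ncard ≤ m + 1)) :
    CovDimLE ↥(K : Set Y) m := by
  classical
  haveI : CompactSpace ↥(K : Set Y) := isCompact_iff_compactSpace.mp K.isCompact
  haveI : Nonempty ↥(K : Set Y) := K.nonempty.to_subtype
  intro 𝒰 hop hcov
  have h𝒰ne : ∃ U₀, U₀ ∈ 𝒰 := by
    obtain ⟨x⟩ := ‹Nonempty ↥(K : Set Y)›
    have : x ∈ ⋃₀ (𝒰 : Set (Set ↥(K : Set Y))) := hcov ▸ mem_univ x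
    obtain ⟨U, hU, -⟩ := this
    exact ⟨U, hU⟩
  obtain ⟨U₀, hU₀⟩ := h𝒰ne
  obtain ⟨δ, hδ, hleb⟩ := lebesgue_number_lemma_of_metric (s := (univ : Set ↥(K : Set Y)))
    (c := fun i : {U // U ∈ 𝒰} => (i : Set ↥(K : Set Y))) isCompact_univ
    (fun i => hop i i.2)
    (by
      intro x _
      have : x ∈ ⋃₀ (𝒰 : Set (Set ↥(K : Set Y))) := hcov ▸ mem_univ x
      obtain ⟨U, hU, hxU⟩ := this
      exact mem_iUnion.2 ⟨⟨U, hU⟩, hxU⟩)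
  obtain ⟨j, hj⟩ := exists_nat_one_div_lt hδ
  obtain ⟨c, hdiam, hcovc, hmult⟩ := h j
  refine ⟨c.toFinset.image (fun g => (Subtype.val ⁻¹' Gs u g : Set ↥(K : Set Y))), ?_, ?_, ?_, ?_⟩
  · intro V hV
    simp only [Finset.mem_image] at hV
    obtain ⟨g, -, rfl⟩ := hV
    exact (isOpen_Gs u g).preimage continuous_subtype_val
  · rw [eq_univ_iff_forall]
    intro z
    have : (z : Y) ∈ ⋃ g ∈ c, Gs u g := hcovc z.2
    obtain ⟨g, hg, hzg⟩ := mem_iUnion₂.1 this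
    rw [mem_sUnion]
    refine ⟨Subtype.val ⁻¹' Gs u g, ?_, hzg⟩
    simp only [Finset.coe_image, mem_image, Finset.mem_coe, List.mem_toFinset]
    exact ⟨g, hg, rfl⟩
  · intro V hV
    simp only [Finset.mem_image] at hV
    obtain ⟨g, hg, rfl⟩ := hV
    rcases eq_empty_or_nonempty (Subtype.val ⁻¹' Gs u g : Set ↥(K : Set Y)) with he | ⟨x, hx⟩
    · exact ⟨U₀, hU₀, he ▸ empty_subset _⟩
    · obtain ⟨i, hi⟩ := hleb x (mem_univ x)
      refine ⟨i, i.2, fun y hy => hi ?_⟩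
      have hdV : Metric.diam (Subtype.val ⁻¹' Gs u g : Set ↥(K : Set Y)) < δ := by
        have h1 : Metric.diam (Subtype.val ⁻¹' Gs u g : Set ↥(K : Set Y))
            = Metric.diam (Subtype.val '' (Subtype.val ⁻¹' Gs u g : Set ↥(K : Set Y))) :=
          (isometry_subtype_coe.diam_image _).symm
        have h2 : Metric.diam (Subtype.val '' (Subtype.val ⁻¹' Gs u g : Set ↥(K : Set Y)))
            ≤ Metric.diam (Gs u g) :=
          Metric.diam_mono (image_preimage_subset _ _) isBounded_of_compactSpace
        rw [h1]
        exact lt_trans (lt_of_le_of_lt h2 (hdiam g (List.mem_toFinset.1 hg))) hj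
      rw [Metric.mem_ball]
      exact lt_of_le_of_lt (dist_le_diam_of_mem isBounded_of_compactSpace hy hx) hdV
  · intro z
    have hsub : {V ∈ ((c.toFinset.image
          (fun g => (Subtype.val ⁻¹' Gs u g : Set ↥(K : Set Y)))) : Set (Set ↥(K : Set Y))) | z ∈ V}
        ⊆ (fun g => (Subtype.val ⁻¹' Gs u g : Set ↥(K : Set Y))) ''
          {g | g ∈ c ∧ (z : Y) ∈ Gs u g} := by
      rintro V ⟨hV, hzV⟩
      simp only [Finset.coe_image, mem_image, Finset.mem_coe, List.mem_toFinset] at hV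
      obtain ⟨g, hg, rfl⟩ := hV
      exact ⟨g, ⟨hg, hzV⟩, rfl⟩
    have hfin : {g | g ∈ c ∧ (z : Y) ∈ Gs u g}.Finite :=
      (c.toFinset.finite_toSet.subset (fun g hg => List.mem_toFinset.2 hg.1))
    calc {V ∈ ((c.toFinset.image
          (fun g => (Subtype.val ⁻¹' Gs u g : Set ↥(K : Set Y)))) : Set (Set ↥(K : Set Y))) | z ∈ V}.ncard
        ≤ ((fun g => (Subtype.val ⁻¹' Gs u g : Set ↥(K : Set Y))) ''
          {g | g ∈ c ∧ (z : Y) ∈ Gs u g}).ncard := Set.ncard_le_ncard hsub (hfin.image _)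
      _ ≤ {g | g ∈ c ∧ (z : Y) ∈ Gs u g}.ncard := Set.ncard_image_le hfin
      _ ≤ m + 1 := hmult (z : Y) z.2

lemma codes_of_covDimLE (u : ℕ → Y) (hu : DenseRange u) (K : NonemptyCompacts Y) (m : ℕ)
    (h : CovDimLE ↥(K : Set Y) m) (j : ℕ) :
    ∃ c : List (List (ℕ × ℚ)),
      (∀ g ∈ c, Metric.diam (Gs u g) < 1 / (j + 1)) ∧
      ((K : Set Y) ⊆ ⋃ g ∈ c, Gs u g) ∧
      (∀ z ∈ (K : Set Y), {g | g ∈ c ∧ z ∈ Gs u g}.ncard ≤ m + 1) := by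
  classical
  haveI : CompactSpace ↥(K : Set Y) := isCompact_iff_compactSpace.mp K.isCompact
  set q : ℝ := 1 / (8 * (j + 1)) with hq
  have hqpos : 0 < q := by positivity
  have hinit : (univ : Set ↥(K : Set Y)) ⊆
      ⋃ n : ℕ, (Subtype.val ⁻¹' Metric.ball (u n) q : Set ↥(K : Set Y)) := by
    intro x _
    obtain ⟨n, hn⟩ := hu.exists_dist_lt (x : Y) hqpos
    exact mem_iUnion.2 ⟨n, by rwa [mem_preimage, Metric.mem_ball]⟩
  obtain ⟨T, hT⟩ := isCompact_univ.elim_finite_subcover _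
    (fun n : ℕ => (isOpen_ball.preimage continuous_subtype_val :
      IsOpen (Subtype.val ⁻¹' Metric.ball (u n) q : Set ↥(K : Set Y)))) hinit
  obtain ⟨𝒱, hVop, hVcov, hVref, hVmult⟩ := h
    (T.image (fun n => (Subtype.val ⁻¹' Metric.ball (u n) q : Set ↥(K : Set Y))))
    (by
      intro U hU
      simp only [Finset.mem_image] at hU
      obtain ⟨n, -, rfl⟩ := hU
      exact isOpen_ball.preimage continuous_subtype_val)
    (by
      rw [eq_univ_iff_forall]
      intro x
      obtain ⟨n, hn, hxn⟩ := mem_iUnion₂.1 (hT (mem_univ x))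
      refine ⟨Subtype.val ⁻¹' Metric.ball (u n) q, ?_, hxn⟩
      simp only [Finset.coe_image]
      exact mem_image_of_mem _ hn)
  obtain ⟨v, hvcov, hvop, hvcl⟩ := exists_subset_iUnion_closure_subset
    (u := fun i : {V // V ∈ 𝒱} => (i : Set ↥(K : Set Y))) (s := univ)
    isClosed_univ (fun i => hVop i i.2) (fun x _ => Set.toFinite _)
    (by
      intro x _
      obtain ⟨V, hV, hxV⟩ := mem_sUnion.1 (hVcov ▸ mem_univ x)
      exact mem_iUnion.2 ⟨⟨V, hV⟩, hxV⟩)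
  have hWex : ∀ i : {V // V ∈ 𝒱}, ∃ W : Set Y, IsOpen W ∧
      Subtype.val ⁻¹' W = (i : Set ↥(K : Set Y)) := fun i => isOpen_induced_iff.1 (hVop i i.2)
  choose W hWop hWind using hWex
  set C : {V // V ∈ 𝒱} → Set Y := fun i => Subtype.val '' closure (v i) with hC
  have hCcomp : ∀ i, IsCompact (C i) :=
    fun i => (isClosed_closure.isCompact).image continuous_subtype_val
  have hCW : ∀ i, C i ⊆ W i := by
    rintro i x ⟨z, hz, rfl⟩
    have : z ∈ (i : Set ↥(K : Set Y)) := hvcl i hz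
    rwa [← hWind i] at this
  have hOex : ∀ i : {V // V ∈ 𝒱}, ∃ ε : ℝ, 0 < ε ∧ ε ≤ q ∧ thickening ε (C i) ⊆ W i := by
    intro i
    obtain ⟨δ', hδ', hth⟩ := (hCcomp i).exists_thickening_subset_open (hWop i) (hCW i)
    exact ⟨min δ' q, lt_min hδ' hqpos, min_le_right _ _,
      (thickening_mono (min_le_left _ _) _).trans hth⟩
  choose ε hεpos hεq hεth using hOex
  set O : {V // V ∈ 𝒱} → Set Y := fun i => thickening (ε i) (C i) with hO
  have hOopen : ∀ i, IsOpen (O i) := fun i => isOpen_thickening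
  have hCOsub : ∀ i, C i ⊆ O i := fun i => self_subset_thickening (hεpos i) _
  have hOW : ∀ i, O i ⊆ W i := fun i => hεth i
  have hCdiam : ∀ i, Metric.diam (C i) ≤ 2 * q := by
    intro i
    obtain ⟨U, hU, hiU⟩ := hVref i i.2
    simp only [Finset.mem_image] at hU
    obtain ⟨n, -, rfl⟩ := hU
    have hsub : C i ⊆ Metric.ball (u n) q := by
      rintro x ⟨z, hz, rfl⟩
      exact hiU (hvcl i hz)
    calc Metric.diam (C i) ≤ Metric.diam (Metric.ball (u n) q) :=
          Metric.diam_mono hsub isBounded_of_compactSpace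
      _ ≤ 2 * q := diam_ball hqpos.le
  have hOdiam : ∀ i, Metric.diam (O i) ≤ 4 * q := by
    intro i
    calc Metric.diam (O i) ≤ Metric.diam (C i) + 2 * ε i := diam_thickening_le _ (hεpos i).le
      _ ≤ 2 * q + 2 * q := by
          have := hεq i
          have := hCdiam i
          linarith
      _ = 4 * q := by ring
  have hgex : ∀ i : {V // V ∈ 𝒱}, ∃ g : List (ℕ × ℚ), C i ⊆ Gs u g ∧ Gs u g ⊆ O i :=
    fun i => exists_basic_cover u hu (C i) (O i) (hCcomp i) (hOopen i) (hCOsub i)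
  choose g hg1 hg2 using hgex
  refine ⟨(Finset.univ : Finset {V // V ∈ 𝒱}).toList.map g, ?_, ?_, ?_⟩
  · intro g' hg'
    simp only [List.mem_map, Finset.mem_toList] at hg'
    obtain ⟨i, -, rfl⟩ := hg'
    have hle : Metric.diam (Gs u (g i)) ≤ 4 * q :=
      le_trans (Metric.diam_mono (hg2 i) isBounded_of_compactSpace) (hOdiam i)
    have h4q : 4 * q < 1 / (j + 1) := by
      rw [hq, mul_one_div, div_lt_div_iff₀ (by positivity) (by positivity : (0:ℝ) < (j:ℝ)+1)]
      nlinarith [(by positivity : (0:ℝ) < (j:ℝ)+1)]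
    exact lt_of_le_of_lt hle h4q
  · intro z hz
    obtain ⟨i, hi⟩ := mem_iUnion.1 (hvcov (mem_univ (⟨z, hz⟩ : ↥(K : Set Y))))
    have : z ∈ C i := ⟨⟨z, hz⟩, subset_closure hi, rfl⟩
    exact mem_iUnion₂.2 ⟨g i, by simp [Finset.mem_toList], hg1 i this⟩
  · intro z hz
    have hsub : {g' | g' ∈ (Finset.univ : Finset {V // V ∈ 𝒱}).toList.map g ∧ z ∈ Gs u g'}
        ⊆ g '' {i : {V // V ∈ 𝒱} | (⟨z, hz⟩ : ↥(K : Set Y)) ∈ (i : Set ↥(K : Set Y))} := by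
      rintro g' ⟨hg', hzg'⟩
      simp only [List.mem_map, Finset.mem_toList] at hg'
      obtain ⟨i, -, rfl⟩ := hg'
      have hzW : z ∈ W i := hOW i (hg2 i hzg')
      have hzV : (⟨z, hz⟩ : ↥(K : Set Y)) ∈ (Subtype.val ⁻¹' W i : Set ↥(K : Set Y)) := hzW
      rw [hWind i] at hzV
      exact ⟨i, hzV, rfl⟩
    have himeq : Subtype.val ''
        {i : {V // V ∈ 𝒱} | (⟨z, hz⟩ : ↥(K : Set Y)) ∈ (i : Set ↥(K : Set Y))}
        = {V ∈ (𝒱 : Set (Set ↥(K : Set Y))) | (⟨z, hz⟩ : ↥(K : Set Y)) ∈ V} := by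
      ext V
      constructor
      · rintro ⟨i, hi, rfl⟩; exact ⟨i.2, hi⟩
      · rintro ⟨hV, hzV⟩; exact ⟨⟨V, hV⟩, hzV, rfl⟩
    calc {g' | g' ∈ (Finset.univ : Finset {V // V ∈ 𝒱}).toList.map g ∧ z ∈ Gs u g'}.ncard
        ≤ (g '' {i : {V // V ∈ 𝒱} | (⟨z, hz⟩ : ↥(K : Set Y)) ∈ (i : Set ↥(K : Set Y))}).ncard :=
          Set.ncard_le_ncard hsub ((Set.toFinite _).image _)
      _ ≤ {i : {V // V ∈ 𝒱} | (⟨z, hz⟩ : ↥(K : Set Y)) ∈ (i : Set ↥(K : Set Y))}.ncard :=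
          Set.ncard_image_le (Set.toFinite _)
      _ = {V ∈ (𝒱 : Set (Set ↥(K : Set Y))) | (⟨z, hz⟩ : ↥(K : Set Y)) ∈ V}.ncard := by
          rw [← himeq]
          exact (Set.ncard_image_of_injective _ Subtype.val_injective).symm
      _ ≤ m + 1 := hVmult _

lemma measurable_covDim_fam (u : ℕ → Y) (hu : DenseRange u)
    [MeasurableSpace (Hyper Y)] [BorelSpace (Hyper Y)] (m : ℕ) :
    MeasurableSet {K : Hyper Y | CovDimLE ↥(K : Set Y) m} := by
  have heq : {K : Hyper Y | CovDimLE ↥(K : Set Y) m}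
      = ⋂ j : ℕ, ⋃ c : List (List (ℕ × ℚ)),
        {K : Hyper Y | (∀ g ∈ c, Metric.diam (Gs u g) < 1 / (j + 1)) ∧
          ((K : Set Y) ⊆ ⋃ g ∈ c, Gs u g) ∧
          ∀ z ∈ (K : Set Y), {g | g ∈ c ∧ z ∈ Gs u g}.ncard ≤ m + 1} := by
    ext K
    simp only [mem_setOf_eq, mem_iInter, mem_iUnion]
    exact ⟨fun h j => codes_of_covDimLE u hu K m h j, fun h => covDimLE_of_codes u K m h⟩
  rw [heq]
  refine MeasurableSet.iInter (fun j => MeasurableSet.iUnion (fun c => ?_))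
  by_cases hd : ∀ g ∈ c, Metric.diam (Gs u g) < 1 / ((j : ℝ) + 1)
  · have heq2 : {K : Hyper Y | (∀ g ∈ c, Metric.diam (Gs u g) < 1 / (j + 1)) ∧
          ((K : Set Y) ⊆ ⋃ g ∈ c, Gs u g) ∧
          ∀ z ∈ (K : Set Y), {g | g ∈ c ∧ z ∈ Gs u g}.ncard ≤ m + 1}
        = {K : Hyper Y | (K : Set Y) ⊆ ⋃ g ∈ c, Gs u g} ∩
          {K : Hyper Y | ((K : Set Y) ∩
            {z : Y | m + 1 < {g | g ∈ c ∧ z ∈ Gs u g}.ncard}).Nonempty}ᶜ := by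
      ext K
      simp only [mem_setOf_eq, mem_inter_iff, mem_compl_iff]
      constructor
      · rintro ⟨-, hA, hB⟩
        refine ⟨hA, ?_⟩
        rintro ⟨z, hzK, hzE⟩
        exact absurd (hB z hzK) (not_le.2 hzE)
      · rintro ⟨hA, hne⟩
        exact ⟨hd, hA, fun z hz => not_lt.1 fun hlt => hne ⟨z, hz, hlt⟩⟩
    rw [heq2]
    exact ((open_subset_fam _ (isOpen_biUnion fun g _ => isOpen_Gs u g)).measurableSet).inter
      ((open_meet_fam _ (isOpen_multE u c m)).measurableSet.compl)
  · have heq2 : {K : Hyper Y | (∀ g ∈ c, Metric.diam (Gs u g) < 1 / (j + 1)) ∧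
          ((K : Set Y) ⊆ ⋃ g ∈ c, Gs u g) ∧
          ∀ z ∈ (K : Set Y), {g | g ∈ c ∧ z ∈ Gs u g}.ncard ≤ m + 1} = ∅ := by
      ext K
      simp only [mem_setOf_eq, mem_empty_iff_false, iff_false]
      rintro ⟨h1, -, -⟩
      exact hd h1
    rw [heq2]
    exact MeasurableSet.empty

lemma homeo_image_exists {X : Type} [MetricSpace X] (s : Set X) (hs : IsCompact s)
    (F : Set ↥s) (hF : IsClosed F) : Nonempty (↥F ≃ₜ ↥(Subtype.val '' F)) := by
  haveI : CompactSpace ↥s := isCompact_iff_compactSpace.mp hs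
  haveI : CompactSpace ↥F := isCompact_iff_compactSpace.mp hF.isCompact
  have hcont : Continuous ⇑(Equiv.Set.image Subtype.val F Subtype.val_injective) := by
    rw [continuous_induced_rng]
    have heq : (Subtype.val ∘ ⇑(Equiv.Set.image Subtype.val F Subtype.val_injective))
        = fun x : ↥F => ((x : ↥s) : X) := by
      funext x
      simp [Equiv.Set.image, Equiv.Set.imageOfInjOn]
    rw [heq]
    exact continuous_subtype_val.comp continuous_subtype_val
  exact ⟨hcont.homeoOfEquivCompactToT2⟩

lemma not_HID_iff (K : Hyper Y) :
    ¬ HereditarilyInfiniteDimensional ↥(K : Set Y) ↔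
      (∃ m, CovDimLE ↥(K : Set Y) m) ∨
      ∃ L : Hyper Y, (L : Set Y) ⊆ (K : Set Y) ∧ (∃ m, CovDimLE ↥(L : Set Y) m) ∧
        ¬ CovDimLE ↥(L : Set Y) 0 := by
  haveI : CompactSpace ↥(K : Set Y) := isCompact_iff_compactSpace.mp K.isCompact
  unfold HereditarilyInfiniteDimensional
  rw [not_and_or]
  push_neg
  constructor
  · rintro (h | ⟨F, hFcl, hFne, ⟨m, hm⟩, h0⟩)
    · exact Or.inl h
    · -- build L from F
      have hLcomp : IsCompact (Subtype.val '' F) := (hFcl.isCompact).image continuous_subtype_val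
      have hLne : (Subtype.val '' F).Nonempty := hFne.image _
      set L : Hyper Y := ⟨⟨Subtype.val '' F, hLcomp⟩, hLne⟩ with hLdef
      obtain ⟨e⟩ := homeo_image_exists (K : Set Y) K.isCompact F hFcl
      refine Or.inr ⟨L, ?_, ⟨m, (covDimLE_iff_homeo e m).1 hm⟩,
        fun hc => h0 ((covDimLE_iff_homeo e 0).2 hc)⟩
      rintro x ⟨z, -, rfl⟩
      exact z.2
  · rintro (h | ⟨L, hLK, ⟨m, hm⟩, h0⟩)
    · exact Or.inl h
    · refine Or.inr ?_
      set F : Set ↥(K : Set Y) := Subtype.val ⁻¹' (L : Set Y) with hFdef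
      have hFcl : IsClosed F := L.isCompact.isClosed.preimage continuous_subtype_val
      have hFne : F.Nonempty := by
        obtain ⟨x, hx⟩ := L.nonempty
        exact ⟨⟨x, hLK hx⟩, hx⟩
      have himg : Subtype.val '' F = (L : Set Y) := by
        rw [hFdef, image_preimage_eq_inter_range, Subtype.range_coe,
          inter_eq_self_of_subset_left hLK]
      obtain ⟨e1⟩ := homeo_image_exists (K : Set Y) K.isCompact F hFcl
      have e : ↥F ≃ₜ ↥(L : Set Y) := e1.trans (Homeomorph.setCongr himg)
      exact ⟨F, hFcl, hFne, ⟨m, (covDimLE_iff_homeo e m).2 hm⟩,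
        fun hc => h0 ((covDimLE_iff_homeo e 0).1 hc)⟩

end Statement18Aux

/-- For every compact metric space `Y`, the family `HID(Y)` of all
hereditarily infinite-dimensional compacta contained in `Y` is a coanalytic subset of
the hyperspace `2^Y`. -/
theorem statement18 (Y : Type) [MetricSpace Y] [CompactSpace Y] :
    IsCoanalytic {K : Hyper Y | HereditarilyInfiniteDimensional (K : Set Y)} := by
  unfold IsCoanalytic
  rcases isEmpty_or_nonempty Y with hY | hY
  · haveI : IsEmpty (Hyper Y) := ⟨fun K => by
      obtain ⟨x, -⟩ := K.nonempty
      exact hY.false x⟩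
    rw [eq_empty_of_isEmpty
      ({K : Hyper Y | HereditarilyInfiniteDimensional (K : Set Y)}ᶜ)]
    exact MeasureTheory.analyticSet_empty
  · set u : ℕ → Y := denseSeq Y with hudef
    have hu : DenseRange u := denseRange_denseSeq Y
    borelize (Hyper Y)
    have hB : ∀ m, MeasurableSet {K : Hyper Y | CovDimLE ↥(K : Set Y) m} :=
      measurable_covDim_fam u hu
    have hcompl : {K : Hyper Y | HereditarilyInfiniteDimensional (K : Set Y)}ᶜ =
        (⋃ m, {K : Hyper Y | CovDimLE ↥(K : Set Y) m}) ∪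
        (Prod.fst '' {p : Hyper Y × Hyper Y | (p.2 : Set Y) ⊆ (p.1 : Set Y) ∧
          (∃ m, CovDimLE ↥(p.2 : Set Y) m) ∧ ¬ CovDimLE ↥(p.2 : Set Y) 0}) := by
      ext K
      rw [mem_compl_iff, mem_setOf_eq, not_HID_iff]
      constructor
      · rintro (⟨m, hm⟩ | ⟨L, hLK, hLm, hL0⟩)
        · exact Or.inl (mem_iUnion.2 ⟨m, hm⟩)
        · exact Or.inr ⟨(K, L), ⟨hLK, hLm, hL0⟩, rfl⟩
      · rintro (hK | ⟨⟨K', L⟩, ⟨h1, h2, h3⟩, rfl⟩)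
        · obtain ⟨m, hm⟩ := mem_iUnion.1 hK
          exact Or.inl ⟨m, hm⟩
        · exact Or.inr ⟨L, h1, h2, h3⟩
    rw [hcompl, Set.union_eq_iUnion]
    apply MeasureTheory.AnalyticSet.iUnion
    intro b
    cases b <;> simp only [cond_true, cond_false]
    · apply MeasureTheory.AnalyticSet.image_of_continuous (f := Prod.fst) ?_ continuous_fst
      apply MeasurableSet.analyticSet
      have hTeq : {p : Hyper Y × Hyper Y | (p.2 : Set Y) ⊆ (p.1 : Set Y) ∧
          (∃ m, CovDimLE ↥(p.2 : Set Y) m) ∧ ¬ CovDimLE ↥(p.2 : Set Y) 0}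
          = {p : Hyper Y × Hyper Y | (p.2 : Set Y) ⊆ (p.1 : Set Y)} ∩
            (Prod.snd ⁻¹' (⋃ m, {K : Hyper Y | CovDimLE ↥(K : Set Y) m})) ∩
            (Prod.snd ⁻¹' {K : Hyper Y | CovDimLE ↥(K : Set Y) 0})ᶜ := by
        ext ⟨K, L⟩
        simp only [mem_setOf_eq, mem_inter_iff, mem_preimage, mem_compl_iff, mem_iUnion]
        tauto
      rw [hTeq]
      exact ((closed_subset_rel.measurableSet).inter
        ((MeasurableSet.iUnion hB).preimage measurable_snd)).inter
        (((hB 0).preimage measurable_snd).compl)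
    · exact MeasurableSet.analyticSet (MeasurableSet.iUnion hB)
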